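/- arXiv:1807.07945 — 4 statements merged into one kernel-verified Lean document; each statement's English description precedes it below -/
import Mathlib

section
/- Let k ≥ 2 and λ ≥ 1 be integers, and let x be an infinite word such that the lower density of AP(x,k,λ) is strictly less than (1 + ⌊(k² - k)/(λ² + λ)⌋)^{-1}. Then for every positive integer ℓ, there exists a nonempty finite word u with |u| ≤ (k-1)·⌊(k² - k)/(λ² + λ)⌋ such that u^ℓ is a factor of x. -/
/-- `u ^ ℓ` : the finite word `u` concatenated with itself `ℓ` times. -/
def powWord {A : Type*} (u : List A) (ℓ : ℕ) : List A :=
  (List.replicate ℓ u).flatten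

/-- The finite word `u` occurs in the infinite word `x` at position `i`. -/
def OccursAt {A : Type*} (x : ℕ → A) (u : List A) (i : ℕ) : Prop :=
  u = (List.range u.length).map fun j => x (i + j)

/-- The finite word `u` is a factor of the infinite word `x`. -/
def IsFactor {A : Type*} (x : ℕ → A) (u : List A) : Prop :=
  ∃ i, OccursAt x u i

/-- The `i`-th block of length `m` of the infinite word `x`, so that the prefix
of `x` of length `k*m` is `blockAt x m 0 ++ blockAt x m 1 ++ ⋯ ++ blockAt x m (k-1)`. -/
def blockAt {A : Type*} (x : ℕ → A) (m i : ℕ) : List A :=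
  (List.range m).map fun t => x (i * m + t)

/-- `APset x k λ` : the set of `m ≥ 1` such that the prefix of `x` of length `k*m` is a
`(k,λ)`-anti-power, i.e. writing it as `k` consecutive blocks of length `m`, for every
block index `j < k` the number of `i < k` whose block equals the `j`-th block is at most `λ`. -/
def APset {A : Type*} (x : ℕ → A) (k lam : ℕ) : Set ℕ :=
  {m | 1 ≤ m ∧ ∀ j < k,
    Nat.card {i : ℕ // i < k ∧ blockAt x m i = blockAt x m j} ≤ lam}

/-- The lower density of a set of natural numbers:
`liminf_{n → ∞} |S ∩ {1,…,n}| / n`. -/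
noncomputable def lowerDensity (S : Set ℕ) : ℝ :=
  Filter.atTop.liminf fun n => (Nat.card ↥(S ∩ Set.Icc 1 n) : ℝ) / n

lemma powWord_succ {A : Type*} (u : List A) (c : ℕ) :
    powWord u (c+1) = u ++ powWord u c := by
  simp [powWord, List.replicate_succ]

lemma nat_lt_div_succ_mul (a b : ℕ) (hb : 0 < b) : a < (a/b+1)*b := by
  have h9 := Nat.div_add_mod a b
  have h10 := Nat.mod_lt a hb
  calc a = b*(a/b) + a % b := h9.symm
  _ < b*(a/b) + b := Nat.add_lt_add_left h10 _
  _ = (a/b+1)*b := by ring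

lemma occurs_pow {A : Type*} (x : ℕ → A) (s₀ p L ℓ : ℕ)
    (hp : 0 < p) (hL : ℓ * p ≤ L)
    (per : ∀ r, r < L → x (s₀ + r) = x (s₀ + r + p)) :
    ∃ u : List A, u ≠ [] ∧ u.length = p ∧ IsFactor x (powWord u ℓ) := by
  set u : List A := (List.range p).map (fun s => x (s₀ + s)) with hu
  have hulen : u.length = p := by simp [hu]
  have hmod : ∀ r, r < ℓ * p → x (s₀ + r) = x (s₀ + r % p) := by
    intro r
    induction r using Nat.strong_induction_on with
    | _ r ih =>
      intro hr
      by_cases h : r < p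
      · rw [Nat.mod_eq_of_lt h]
      · push_neg at h
        have h1 : r - p < L := lt_of_le_of_lt (Nat.sub_le _ _) (lt_of_lt_of_le hr hL)
        have h2 : x (s₀ + (r - p)) = x (s₀ + r) := by
          have h5 := per (r - p) h1
          rwa [show s₀ + (r - p) + p = s₀ + r by omega] at h5
        have h3 := ih (r - p) (by omega) (by omega)
        have h4 : (r - p) % p = r % p := by
          conv_rhs => rw [show r = (r - p) + p by omega]
          rw [Nat.add_mod_right]
        rw [← h2, h3, h4]
  have hlist : ∀ c : ℕ, powWord u c = (List.range (c*p)).map (fun r => x (s₀ + r % p)) := by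
    intro c
    induction c with
    | zero => simp [powWord]
    | succ c ih =>
      rw [powWord_succ, ih, show (c+1)*p = p + c*p by ring, List.range_add,
        List.map_append, List.map_map]
      congr 1
      · rw [hu]
        apply List.map_congr_left
        intro s hs
        rw [Nat.mod_eq_of_lt (List.mem_range.mp hs)]
      · apply List.map_congr_left
        intro r hr
        simp [Function.comp, Nat.add_mod_left]
  refine ⟨u, ?_, hulen, s₀, ?_⟩
  · intro h
    rw [h] at hulen
    simp at hulen
    omega
  · show powWord u ℓ = (List.range (powWord u ℓ).length).map fun j0 => x (s₀ + j0)
    have hlen2 : (powWord u ℓ).length = ℓ * p := by rw [hlist ℓ]; simp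
    rw [hlen2, hlist ℓ]
    apply List.map_congr_left
    intro r hr
    exact (hmod r (List.mem_range.mp hr)).symm

lemma blockAt_point {A : Type*} (x : ℕ → A) (nn i j : ℕ)
    (h : blockAt x nn i = blockAt x nn j) : ∀ s, s < nn → x (i*nn + s) = x (j*nn + s) := by
  rw [blockAt, blockAt, List.map_inj_left] at h
  intro s hs
  exact h s (List.mem_range.mpr hs)

lemma inner_lemma {A : Type*} (x : ℕ → A) (k γ ℓ m i j t t' : ℕ)
    (hij : i < j) (hjk : j < k) (htt' : t < t') (ht'γ : t' ≤ γ)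
    (hm : (ℓ+1)*((k-1)*γ) + 1 ≤ m)
    (hb1 : blockAt x (m+t) i = blockAt x (m+t) j)
    (hb2 : blockAt x (m+t') i = blockAt x (m+t') j) :
    ∃ u : List A, u ≠ [] ∧ u.length ≤ (k-1)*γ ∧ IsFactor x (powWord u ℓ) := by
  set n := m + t with hn
  set n' := m + t' with hn'
  set q := j - i with hq
  set δ := t' - t with hδ
  have hjq : j = i + q := by omega
  have hn'δ : n' = n + δ := by omega
  have hq1 : 1 ≤ q := by omega
  have hδ1 : 1 ≤ δ := by omega
  have hqk : q ≤ k - 1 := by omega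
  have hδγ : δ ≤ γ := by omega
  have hik : i ≤ k - 1 := by omega
  have hP : q * δ ≤ (k-1)*γ := Nat.mul_le_mul hqk hδγ
  have hiδ : i * δ ≤ (k-1)*γ := Nat.mul_le_mul hik hδγ
  have hℓP : ℓ * (q*δ) ≤ ℓ * ((k-1)*γ) := Nat.mul_le_mul_left _ hP
  have hmL : ℓ*((k-1)*γ) + (k-1)*γ + 1 ≤ m := by
    have e : (ℓ+1)*((k-1)*γ) = ℓ*((k-1)*γ) + (k-1)*γ := by ring
    rw [e] at hm
    exact hm
  have hL : ℓ * (q*δ) ≤ n - i*δ := by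
    apply Nat.le_sub_of_add_le
    have h1 : ℓ*(q*δ) + i*δ ≤ ℓ*((k-1)*γ) + (k-1)*γ := Nat.add_le_add hℓP hiδ
    calc ℓ*(q*δ) + i*δ ≤ ℓ*((k-1)*γ) + (k-1)*γ := h1
    _ ≤ m := by generalize (k-1)*γ = Z at hmL ⊢; generalize ℓ*Z = Y at hmL ⊢; omega
    _ ≤ n := by omega
  have per : ∀ r, r < n - i*δ → x ((i*n' + q*n) + r) = x ((i*n' + q*n) + r + q*δ) := by
    intro r hr
    have hiδr : i*δ + r < n := by
      generalize hw : i*δ = w at hr ⊢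
      omega
    have e1 := blockAt_point x n i j hb1 (i*δ + r) hiδr
    have e2 : x (i*n' + r) = x (j*n' + r) := by
      apply blockAt_point x n' i j hb2 r
      have h7 : r < n := lt_of_le_of_lt (Nat.le_add_left r (i*δ)) hiδr
      omega
    have i1 : i*n + (i*δ + r) = i*n' + r := by rw [hn'δ]; ring
    have i2 : j*n + (i*δ + r) = (i*n' + q*n) + r := by rw [hjq, hn'δ]; ring
    have i3 : j*n' + r = (i*n' + q*n) + r + q*δ := by rw [hjq, hn'δ]; ring
    calc x ((i*n'+q*n) + r) = x (j*n + (i*δ+r)) := by rw [i2]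
    _ = x (i*n + (i*δ+r)) := e1.symm
    _ = x (i*n' + r) := by rw [i1]
    _ = x (j*n' + r) := e2
    _ = x ((i*n'+q*n) + r + q*δ) := by rw [i3]
  obtain ⟨u, hu1, hu2, hu3⟩ := occurs_pow x (i*n' + q*n) (q*δ) (n - i*δ) ℓ
    (Nat.mul_pos hq1 hδ1) hL per
  refine ⟨u, hu1, ?_, hu3⟩
  rw [hu2]
  exact hP

open Filter in
lemma density_lb (S : Set ℕ) (g M : ℕ) (hS : ∀ m ∈ S, 1 ≤ m)
    (h : ∀ m, M ≤ m → ∃ t, t ≤ g ∧ m + t ∈ S) :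
    ((g : ℝ) + 1)⁻¹ ≤ lowerDensity S := by
  have h' : ∀ j : ℕ, ∃ e, M + j * (g+1) ≤ e ∧ e ≤ M + j * (g+1) + g ∧ e ∈ S := by
    intro j
    obtain ⟨t, ht, hts⟩ := h (M + j*(g+1)) (Nat.le_add_right _ _)
    exact ⟨M + j*(g+1) + t, Nat.le_add_right _ _, Nat.add_le_add_left ht _, hts⟩
  choose e he1 he2 he3 using h'
  have hemono : StrictMono e := by
    apply strictMono_nat_of_lt_succ
    intro j
    have a1 := he2 j
    have a2 := he1 (j+1)
    have key : M + j*(g+1) + g < M + (j+1)*(g+1) := by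
      have e4 : (j+1)*(g+1) = j*(g+1) + (g+1) := by ring
      rw [e4]
      generalize j*(g+1) = A
      omega
    exact lt_of_le_of_lt a1 (lt_of_lt_of_le key a2)
  have hcard : ∀ n : ℕ, (n - (M+g))/(g+1) ≤ Nat.card ↥(S ∩ Set.Icc 1 n) := by
    intro n
    set J := (n - (M+g))/(g+1) with hJ
    have hfin : (S ∩ Set.Icc 1 n).Finite := Set.Finite.inter_of_right (Set.finite_Icc 1 n) S
    have hfin' : Finite ↥(S ∩ Set.Icc 1 n) := hfin.to_subtype
    have hmem : ∀ j : ℕ, j < J → e j ∈ S ∩ Set.Icc 1 n := by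
      intro j hj
      refine ⟨he3 j, hS _ (he3 j), ?_⟩
      have h1 := he2 j
      have h4 : (j+1)*(g+1) = j*(g+1) + (g+1) := by ring
      have h2 : j*(g+1) + (g+1) ≤ J*(g+1) := by rw [← h4]; exact Nat.mul_le_mul_right _ hj
      have h3 : J*(g+1) ≤ n - (M+g) := Nat.div_mul_le_self _ _
      generalize j*(g+1) = A at h1 h2
      generalize J*(g+1) = B at h2 h3
      omega
    have hinj : Function.Injective
        (fun j : Fin J => (⟨e j, hmem j j.2⟩ : ↥(S ∩ Set.Icc 1 n))) := by
      intro a b hab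
      exact Fin.ext (hemono.injective (congrArg Subtype.val hab))
    have := Nat.card_le_card_of_injective _ hinj
    rw [Nat.card_eq_fintype_card (α := Fin J), Fintype.card_fin] at this; exact this
  set C : ℝ := (M : ℝ) + 2*g + 1 with hC
  have hnJ : ∀ n : ℕ, (n : ℝ) ≤ (((n - (M+g))/(g+1) : ℕ) : ℝ) * ((g:ℝ)+1) + C := by
    intro n
    have h1 : n ≤ ((n - (M+g))/(g+1)) * (g+1) + (M + 2*g + 1) := by
      have h2 : n - (M+g) < ((n - (M+g))/(g+1) + 1) * (g+1) := nat_lt_div_succ_mul _ _ (by omega)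
      have h3 : ((n - (M+g))/(g+1) + 1) * (g+1) = ((n - (M+g))/(g+1)) * (g+1) + (g+1) := by ring
      rw [h3] at h2
      generalize ((n - (M+g))/(g+1)) * (g+1) = B at h2 ⊢
      omega
    calc (n:ℝ) ≤ ((((n - (M+g))/(g+1)) * (g+1) + (M + 2*g + 1) : ℕ) : ℝ) := by exact_mod_cast h1
    _ = _ := by push_cast [hC]; ring
  set a : ℕ → ℝ := fun n => (Nat.card ↥(S ∩ Set.Icc 1 n) : ℝ) / n with ha
  set b : ℕ → ℝ := fun n => (1 - C/(n:ℝ)) / ((g:ℝ)+1) with hb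
  have hg0 : (0:ℝ) < (g:ℝ)+1 := by positivity
  have hba : ∀ n : ℕ, 1 ≤ n → b n ≤ a n := by
    intro n hn
    have hn0 : (0:ℝ) < n := by exact_mod_cast hn
    have hJr : ((n:ℝ) - C)/((g:ℝ)+1) ≤ (((n - (M+g))/(g+1) : ℕ) : ℝ) := by
      rw [div_le_iff₀ hg0]
      have := hnJ n
      linarith
    have hJcard : ((((n : ℕ) - (M+g))/(g+1) : ℕ) : ℝ) ≤ (Nat.card ↥(S ∩ Set.Icc 1 n) : ℝ) := by
      exact_mod_cast hcard n
    have h1 : (1:ℝ) - C/(n:ℝ) = ((n:ℝ) - C)/n := by field_simp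
    have hbeq : b n = ((n:ℝ) - C)/((g:ℝ)+1) / n := by
      show (1 - C/(n:ℝ))/((g:ℝ)+1) = _
      rw [h1, div_div, div_div, mul_comm]
    rw [hbeq]
    show _ ≤ (Nat.card ↥(S ∩ Set.Icc 1 n) : ℝ) / n
    rw [div_le_div_iff_of_pos_right hn0]
    exact le_trans hJr hJcard
  have hbt : Tendsto b atTop (nhds (((g:ℝ)+1)⁻¹)) := by
    have h0 : Tendsto (fun n : ℕ => C/(n:ℝ)) atTop (nhds 0) :=
      tendsto_const_div_atTop_nhds_zero_nat C
    have h1 : Tendsto (fun n : ℕ => (1 - C/(n:ℝ))) atTop (nhds 1) := by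
      simpa using (tendsto_const_nhds (x := (1:ℝ)) (f := atTop)).sub h0
    have h2 := h1.div_const ((g:ℝ)+1)
    simpa [hb, one_div] using h2
  have hliminf : ((g:ℝ)+1)⁻¹ = Filter.liminf b Filter.atTop := (hbt.liminf_eq).symm
  have hub : ∀ n : ℕ, a n ≤ 1 := by
    intro n
    have hle : Nat.card ↥(S ∩ Set.Icc 1 n) ≤ n := by
      have hfin' : Finite ↥(Set.Icc 1 n) := (Set.finite_Icc 1 n).to_subtype
      have h3 := Nat.card_le_card_of_injective
        (Set.inclusion (Set.inter_subset_right (s := S) (t := Set.Icc 1 n)))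
        (Set.inclusion_injective _)
      have h4 : Nat.card ↥(Set.Icc (1:ℕ) n) = n := by
        rw [Nat.card_eq_card_toFinset, Set.toFinset_Icc, Nat.card_Icc]
        omega
      omega
    show (Nat.card ↥(S ∩ Set.Icc 1 n) : ℝ) / n ≤ 1
    rcases Nat.eq_zero_or_pos n with h | h
    · simp [h]
    · have hn0 : (0:ℝ) < n := by exact_mod_cast h
      rw [div_le_one hn0]
      exact_mod_cast hle
  rw [lowerDensity, hliminf]
  apply Filter.liminf_le_liminf
  · exact Filter.eventually_atTop.mpr ⟨1, hba⟩
  · exact hbt.isBoundedUnder_ge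
  · exact (Filter.isBoundedUnder_of ⟨1, hub⟩).isCoboundedUnder_ge


/-- If `k ≥ 2`, `λ ≥ 1` and the lower density of `AP(x,k,λ)` is strictly
less than `(1 + ⌊(k² - k)/(λ² + λ)⌋)⁻¹`, then for every `ℓ ≥ 1` there is a nonempty word `u`
with `|u| ≤ (k-1)·⌊(k² - k)/(λ² + λ)⌋` such that `u^ℓ` is a factor of `x`. -/
theorem statement1 {A : Type*} (k lam : ℕ) (hk : 2 ≤ k) (hlam : 1 ≤ lam) (x : ℕ → A)
    (hd : lowerDensity (APset x k lam) < ((1 : ℝ) + ((k ^ 2 - k) / (lam ^ 2 + lam) : ℕ))⁻¹) :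
    ∀ ℓ : ℕ, 0 < ℓ → ∃ u : List A, u ≠ [] ∧
      u.length ≤ (k - 1) * ((k ^ 2 - k) / (lam ^ 2 + lam)) ∧ IsFactor x (powWord u ℓ) := by
  classical
  intro ℓ hℓ
  by_contra hcon
  push_neg at hcon
  set γ := (k^2 - k)/(lam^2 + lam) with hγ
  set M := (ℓ+1)*((k-1)*γ) + 1 with hM
  have Hfill : ∀ m, M ≤ m → ∃ t, t ≤ γ ∧ m + t ∈ APset x k lam := by
    intro m hm
    by_contra hnofill
    push_neg at hnofill
    have hm1 : 1 ≤ m := le_trans (by omega) hm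
    have hnot : ∀ t, ∃ jj, t ≤ γ → jj < k ∧
        lam < Nat.card {i : ℕ // i < k ∧ blockAt x (m+t) i = blockAt x (m+t) jj} := by
      intro t
      by_cases ht : t ≤ γ
      · have h1 := hnofill t ht
        rw [APset, Set.mem_setOf_eq] at h1
        push_neg at h1
        obtain ⟨jj, hjk, hcardgt⟩ := h1 (by omega)
        exact ⟨jj, fun _ => ⟨hjk, hcardgt⟩⟩
      · exact ⟨0, fun h => absurd h ht⟩
    choose jj hjj using hnot
    set T : ℕ → Finset ℕ := fun t =>
      (Finset.range k).filter (fun i => blockAt x (m+t) i = blockAt x (m+t) (jj t)) with hT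
    have hTcard : ∀ t, t ≤ γ → lam + 1 ≤ (T t).card := by
      intro t ht
      have h2 := (hjj t ht).2
      have hiff : ∀ i : ℕ, (i < k ∧ blockAt x (m+t) i = blockAt x (m+t) (jj t)) ↔ i ∈ T t := by
        intro i
        rw [hT]
        simp [Finset.mem_filter, Finset.mem_range]
      have heq : Nat.card {i : ℕ // i < k ∧ blockAt x (m+t) i = blockAt x (m+t) (jj t)}
          = (T t).card := by
        rw [Nat.card_congr (Equiv.subtypeEquivRight hiff)]
        simp [Nat.card_eq_fintype_card, Fintype.card_coe]
      omega
    set F : ℕ → Finset (ℕ × ℕ) := fun t => (T t).offDiag with hF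
    have hFcard : ∀ t ∈ Finset.range (γ+1), lam*lam + lam ≤ (F t).card := by
      intro t ht
      rw [hF]
      show lam*lam + lam ≤ (T t).offDiag.card
      rw [Finset.offDiag_card]
      have hc := hTcard t (by simpa [Nat.lt_succ_iff] using ht)
      have h3 : (lam+1)*lam ≤ (T t).card * ((T t).card - 1) :=
        Nat.mul_le_mul hc (by omega)
      have h4 : (T t).card * ((T t).card - 1) = (T t).card * (T t).card - (T t).card := by
        cases hc0 : (T t).card with
        | zero => simp
        | succ d =>
          have h5 : (d+1)*(d+1) = (d+1)*d + (d+1) := by ring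
          simp only [Nat.succ_sub_one]
          rw [h5, Nat.add_sub_cancel]
      have h6 : lam*lam + lam = (lam+1)*lam := by ring
      rw [h6]
      rw [h4] at h3
      exact h3
    have hFsub : ∀ t ∈ Finset.range (γ+1), F t ⊆ (Finset.range k).offDiag := by
      intro t _
      show (T t).offDiag ⊆ _
      intro p hp
      rw [Finset.mem_offDiag] at hp ⊢
      exact ⟨Finset.filter_subset _ _ hp.1, Finset.filter_subset _ _ hp.2.1, hp.2.2⟩
    have hex : ∃ t ∈ Finset.range (γ+1), ∃ t' ∈ Finset.range (γ+1), t ≠ t' ∧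
        ∃ pp, pp ∈ F t ∧ pp ∈ F t' := by
      by_contra hno
      push_neg at hno
      have hdisj : ∀ t ∈ Finset.range (γ+1), ∀ t' ∈ Finset.range (γ+1),
          t ≠ t' → Disjoint (F t) (F t') := by
        intro t ht t' ht' hne
        rw [Finset.disjoint_left]
        intro pp hpt hpt'
        exact hno t ht t' ht' hne pp hpt hpt'
      have h5 := Finset.card_biUnion hdisj
      have h6 : ((Finset.range (γ+1)).biUnion F).card ≤ k*k - k := by
        calc ((Finset.range (γ+1)).biUnion F).card
            ≤ ((Finset.range k).offDiag).card :=
              Finset.card_le_card (Finset.biUnion_subset.mpr hFsub)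
        _ = k*k - k := by rw [Finset.offDiag_card, Finset.card_range]
      have h7 : (γ+1) * (lam*lam + lam) ≤ ∑ t ∈ Finset.range (γ+1), (F t).card := by
        calc (γ+1) * (lam*lam+lam) = ∑ _t ∈ Finset.range (γ+1), (lam*lam+lam) := by
              rw [Finset.sum_const, Finset.card_range, smul_eq_mul]
        _ ≤ _ := Finset.sum_le_sum hFcard
      have hpos : 0 < lam^2 + lam := by positivity
      have key : k^2 - k < (γ+1) * (lam^2+lam) := by
        rw [hγ]
        exact nat_lt_div_succ_mul _ _ hpos
      have e1 : k^2 = k*k := by ring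
      have e2 : lam^2 = lam*lam := by ring
      rw [e1, e2] at key
      have hA : (γ+1)*(lam*lam+lam) ≤ k*k - k :=
        le_trans h7 (le_trans (le_of_eq h5.symm) h6)
      exact absurd hA (not_le.mpr key)
    obtain ⟨t, ht, t', ht', htne, pp, hp1, hp2⟩ := hex
    rw [Finset.mem_range, Nat.lt_succ_iff] at ht ht'
    have hblk : ∀ s, pp ∈ F s →
        blockAt x (m+s) pp.1 = blockAt x (m+s) pp.2 ∧ pp.1 < k ∧ pp.2 < k ∧ pp.1 ≠ pp.2 := by
      intro s hps
      rw [hF, Finset.mem_offDiag] at hps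
      obtain ⟨h1, h2, h3⟩ := hps
      rw [hT, Finset.mem_filter, Finset.mem_range] at h1 h2
      exact ⟨h1.2.trans h2.2.symm, h1.1, h2.1, h3⟩
    obtain ⟨hbeq1, hpk1, hpk2, hne1⟩ := hblk t hp1
    obtain ⟨hbeq2, _, _, _⟩ := hblk t' hp2
    have hfinal : ∃ u : List A, u ≠ [] ∧ u.length ≤ (k-1)*γ ∧ IsFactor x (powWord u ℓ) := by
      rcases htne.lt_or_gt with htl | htl
      · rcases hne1.lt_or_gt with hijl | hijl
        · exact inner_lemma x k γ ℓ m pp.1 pp.2 t t' hijl hpk2 htl ht' hm hbeq1 hbeq2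
        · exact inner_lemma x k γ ℓ m pp.2 pp.1 t t' hijl hpk1 htl ht' hm hbeq1.symm hbeq2.symm
      · rcases hne1.lt_or_gt with hijl | hijl
        · exact inner_lemma x k γ ℓ m pp.1 pp.2 t' t hijl hpk2 htl ht hm hbeq2 hbeq1
        · exact inner_lemma x k γ ℓ m pp.2 pp.1 t' t hijl hpk1 htl ht hm hbeq2.symm hbeq1.symm
    obtain ⟨u, hu1, hu2, hu3⟩ := hfinal
    exact hcon u hu1 hu2 hu3
  have hlb := density_lb (APset x k lam) γ M (fun m hm => hm.1) Hfill
  rw [show ((1:ℝ) + (γ:ℕ)) = ((γ:ℕ):ℝ) + 1 by ring] at hd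
  linarith
end

section
/- For every integer k ≥ 2, every finite word of length (k³ - k² + k)·C(k,2) (over an arbitrary alphabet), where C(k,2) = k(k-1)/2, contains a factor that is a k-power or a factor that is a k-anti-power. In other words, N_α(k,k) ≤ (k³ - k² + k)·C(k,2) for every alphabet size α, where N_α(k,k) is the least N such that every word of length N over an alphabet of size α contains a k-power or a k-anti-power. -/
/-- The `i`-th block of length `m` of a finite word `v`. -/
def listBlock {A : Type*} (v : List A) (m i : ℕ) : List A :=
  (v.drop (i * m)).take m

/-- `w` contains a factor that is a `k`-power `u^k` for some nonempty `u`. -/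
def HasKPowerFactor {A : Type*} (k : ℕ) (w : List A) : Prop :=
  ∃ u : List A, u ≠ [] ∧ (List.replicate k u).flatten <:+: w

/-- `v` is a `k`-anti-power: `v` consists of `k` pairwise distinct blocks of equal
positive length. -/
def IsKAntipower {A : Type*} (k : ℕ) (v : List A) : Prop :=
  ∃ m : ℕ, 1 ≤ m ∧ v.length = k * m ∧
    ∀ i < k, ∀ j < k, i ≠ j → listBlock v m i ≠ listBlock v m j

/-- `w` contains a factor that is a `k`-anti-power. -/
def HasKAntipowerFactor {A : Type*} (k : ℕ) (w : List A) : Prop :=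
  ∃ v : List A, v <:+: w ∧ IsKAntipower k v

/-- `N_α(k,k)` : the least `N` such that every word of length `N` over an alphabet of
size `α` contains a `k`-power or a `k`-anti-power. -/
noncomputable def Nalpha (α k : ℕ) : ℕ :=
  sInf {N | ∀ w : List (Fin α), w.length = N →
    HasKPowerFactor k w ∨ HasKAntipowerFactor k w}

/- ---------- auxiliary lemmas ---------- -/

private lemma blockGet {A : Type*} (w : List A) (s n t : ℕ) (ht : t < n) :
    ((w.drop s).take n)[t]? = w[s + t]? := by
  rw [List.getElem?_take, if_pos ht, List.getElem?_drop]

/-- A word with period `p` on a stretch of `k` blocks is a `k`-power there. -/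
private lemma power_of_period {A : Type*} (w : List A) (p : ℕ) (hp : 1 ≤ p) :
    ∀ K s, s + K * p ≤ w.length →
      (∀ t, s ≤ t → t + p < s + K * p → w[t]? = w[t + p]?) →
      (List.replicate K ((w.drop s).take p)).flatten = (w.drop s).take (K * p) := by
  intro K
  induction K with
  | zero => intro s _ _; simp
  | succ K ih =>
    intro s hlen hper
    have hexp : (K + 1) * p = p + K * p := by ring
    have hexp2 : s + (K + 1) * p = (s + p) + K * p := by ring
    have hblock : K ≠ 0 → (w.drop (s + p)).take p = (w.drop s).take p := by
      intro hK
      apply List.ext_getElem?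
      intro t
      by_cases ht : t < p
      · rw [blockGet _ _ _ _ ht, blockGet _ _ _ _ ht]
        have hKp : p ≤ K * p := Nat.le_mul_of_pos_left p (by omega)
        have := hper (s + t) (by omega) (by
          have : s + t + p < s + p + K * p := by linarith
          linarith)
        rw [show s + p + t = s + t + p by omega]
        exact this.symm
      · rw [List.getElem?_take, if_neg ht, List.getElem?_take, if_neg ht]
    rw [List.replicate_succ, List.flatten_cons, hexp, List.take_add, List.drop_drop]
    congr 1
    rcases Nat.eq_zero_or_pos K with hK | hK
    · subst hK; simp
    · rw [← hblock (by omega)]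
      exact ih (s + p) (by linarith) (fun t h1 h2 => hper t (by linarith) (by linarith))

private lemma pair_eq_of_finset_eq {i j i' j' : ℕ}
    (h : ({i, j} : Finset ℕ) = {i', j'}) (h1 : i < j) (h2 : i' < j') :
    i = i' ∧ j = j' := by
  have hi' : i' ∈ ({i, j} : Finset ℕ) := by rw [h]; simp
  have hj' : j' ∈ ({i, j} : Finset ℕ) := by rw [h]; simp
  have hi : i ∈ ({i', j'} : Finset ℕ) := by rw [← h]; simp
  have hj : j ∈ ({i', j'} : Finset ℕ) := by rw [← h]; simp
  simp only [Finset.mem_insert, Finset.mem_singleton] at hi hj hi' hj'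
  omega

private theorem statement7_main {A : Type*} (k : ℕ) (hk : 2 ≤ k) (w : List A)
    (hw : w.length = (k ^ 3 - k ^ 2 + k) * Nat.choose k 2) :
    HasKPowerFactor k w ∨ HasKAntipowerFactor k w := by
  by_cases hA : HasKAntipowerFactor k w
  · exact Or.inr hA
  left
  obtain ⟨K, rfl⟩ : ∃ K, k = K + 2 := ⟨k - 2, by omega⟩
  clear hk
  set P : ℕ := Nat.choose (K + 2) 2 with hPdef
  have hP : 0 < P := Nat.choose_pos (by omega)
  set a : ℕ := P * ((K + 1) * (K + 1)) with hadef
  have ha : 0 < a := Nat.mul_pos hP (by positivity)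
  -- rewrite the length
  have hcube : (K + 2) ^ 3 - (K + 2) ^ 2 + (K + 2) = (K + 2) * (K * K + 3 * K + 3) := by
    rw [show (K + 2) ^ 3 = (K + 2) ^ 2 * (K + 1) + (K + 2) ^ 2 by ring,
      Nat.add_sub_cancel]
    ring
  have hw' : w.length = (K + 2) * ((K * K + 3 * K + 3) * P) := by
    rw [hw, hcube]; ring
  have haP : a + P ≤ (K * K + 3 * K + 3) * P := by
    have : (K + 1) * (K + 1) + 1 ≤ K * K + 3 * K + 3 := by nlinarith
    calc a + P = ((K + 1) * (K + 1) + 1) * P := by rw [hadef]; ring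
      _ ≤ (K * K + 3 * K + 3) * P := Nat.mul_le_mul_right P this
  -- key: every admissible block length yields a colliding pair
  have key : ∀ m : ℕ, ∃ q : ℕ × ℕ, 1 ≤ m → m ≤ a + P →
      q.1 < q.2 ∧ q.2 < K + 2 ∧ ∀ t < m, w[q.1 * m + t]? = w[q.2 * m + t]? := by
    intro m
    by_cases hm : 1 ≤ m ∧ m ≤ a + P
    · obtain ⟨hm1, hm2⟩ := hm
      have hkm : (K + 2) * m ≤ w.length := by
        rw [hw']
        exact Nat.mul_le_mul_left _ (le_trans hm2 haP)
      have hvlen : (w.take ((K + 2) * m)).length = (K + 2) * m := by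
        rw [List.length_take]; exact min_eq_left hkm
      have hnot : ¬ IsKAntipower (K + 2) (w.take ((K + 2) * m)) :=
        fun h => hA ⟨w.take ((K + 2) * m), (List.take_prefix _ _).isInfix, h⟩
      have hex : ∃ i, i < K + 2 ∧ ∃ j, j < K + 2 ∧ i ≠ j ∧
          listBlock (w.take ((K + 2) * m)) m i = listBlock (w.take ((K + 2) * m)) m j := by
        by_contra hcon
        push_neg at hcon
        exact hnot ⟨m, hm1, hvlen, fun i hi j hj hij => hcon i hi j hj hij⟩
      obtain ⟨i, hi, j, hj, hij, heq⟩ := hex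
      have hblockw : ∀ i', i' < K + 2 →
          listBlock (w.take ((K + 2) * m)) m i' = listBlock w m i' := by
        intro i' hi'
        unfold listBlock
        rw [List.drop_take, List.take_take]
        congr 1
        apply min_eq_left
        have h := Nat.mul_le_mul_right m (show i' + 1 ≤ K + 2 by omega)
        rw [Nat.add_mul, Nat.one_mul] at h
        exact Nat.le_sub_of_add_le (by linarith)
      rw [hblockw i hi, hblockw j hj] at heq
      have letters : ∀ i' j', listBlock w m i' = listBlock w m j' →
          ∀ t < m, w[i' * m + t]? = w[j' * m + t]? := by
        intro i' j' he t ht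
        have := congrArg (fun l => l[t]?) he
        simp only [listBlock] at this
        rwa [blockGet _ _ _ _ ht, blockGet _ _ _ _ ht] at this
      rcases Nat.lt_or_ge i j with hlt | hge
      · exact ⟨(i, j), fun _ _ => ⟨hlt, hj, letters i j heq⟩⟩
      · have hlt : j < i := by omega
        exact ⟨(j, i), fun _ _ => ⟨hlt, hi, letters j i heq.symm⟩⟩
    · exact ⟨(0, 1), fun h1 h2 => absurd ⟨h1, h2⟩ hm⟩
  choose f hf using key
  -- pigeonhole on the window [a, a+P]
  have hpig := Finset.exists_ne_map_eq_of_card_lt_of_maps_to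
    (s := Finset.Icc a (a + P)) (t := Finset.powersetCard 2 (Finset.range (K + 2)))
    (f := fun m => ({(f m).1, (f m).2} : Finset ℕ))
    (by rw [Finset.card_powersetCard, Finset.card_range, Nat.card_Icc, ← hPdef]; omega)
    (by
      intro m hm
      rw [Finset.mem_coe, Finset.mem_Icc] at hm
      obtain ⟨h1, h2, _⟩ := hf m (by omega) (by omega)
      rw [Finset.mem_coe, Finset.mem_powersetCard]
      refine ⟨?_, Finset.card_pair (by omega)⟩
      intro x hx
      simp only [Finset.mem_insert, Finset.mem_singleton] at hx
      rcases hx with rfl | rfl <;> rw [Finset.mem_range] <;> omega)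
  obtain ⟨m1, hmm1, m2, hmm2, hne, hfe⟩ := hpig
  obtain ⟨m, m', hlt, hm, hm', hfeq⟩ :
      ∃ m m', m < m' ∧ m ∈ Finset.Icc a (a + P) ∧ m' ∈ Finset.Icc a (a + P) ∧
        ({(f m).1, (f m).2} : Finset ℕ) = {(f m').1, (f m').2} := by
    rcases lt_or_gt_of_ne hne with h | h
    · exact ⟨m1, m2, h, hmm1, hmm2, hfe⟩
    · exact ⟨m2, m1, h, hmm2, hmm1, hfe.symm⟩
  rw [Finset.mem_Icc] at hm hm'
  obtain ⟨hij, hjk, hper1⟩ := hf m (by omega) (by omega)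
  obtain ⟨hij', hjk', hper2⟩ := hf m' (by omega) (by omega)
  obtain ⟨hie, hje⟩ := pair_eq_of_finset_eq hfeq hij hij'
  rw [← hie, ← hje] at hper2
  set i := (f m).1 with hidef
  set j := (f m).2 with hjdef
  -- introduce d and δ
  obtain ⟨d, hd1, hjeq⟩ : ∃ d, 1 ≤ d ∧ j = i + d := ⟨j - i, by omega, by omega⟩
  obtain ⟨δ, hδ1, hmeq⟩ : ∃ δ, 1 ≤ δ ∧ m' = m + δ := ⟨m' - m, by omega, by omega⟩
  have hδP : δ ≤ P := by omega
  have hdK : d ≤ K + 1 := by omega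
  have hidK : i + d ≤ K + 1 := by omega
  -- the key inequality
  have hsum : i + (K + 1) * d ≤ (K + 1) * (K + 1) := by
    calc i + (K + 1) * d = (i + d) + K * d := by ring
      _ ≤ (K + 1) + K * (K + 1) := Nat.add_le_add hidK (Nat.mul_le_mul_left K hdK)
      _ = (K + 1) * (K + 1) := by ring
  have hkey : i * δ + (K + 1) * (d * δ) ≤ m := by
    calc i * δ + (K + 1) * (d * δ) = (i + (K + 1) * d) * δ := by ring
      _ ≤ ((K + 1) * (K + 1)) * P := Nat.mul_le_mul hsum hδP
      _ = a := by rw [hadef]; ring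
      _ ≤ m := hm.1
  set p : ℕ := d * δ with hpdef
  have hp : 1 ≤ p := Nat.mul_pos hd1 hδ1
  set s₀ : ℕ := j * m + i * δ with hs₀def
  -- length bound
  have hslen : s₀ + (K + 2) * p ≤ w.length := by
    have e1 : s₀ + (K + 2) * p = j * m + (i * δ + (K + 1) * (d * δ)) + d * δ := by
      rw [hs₀def, hpdef]; ring
    have e2 : j * m + m ≤ (K + 2) * m := by
      have := Nat.mul_le_mul_right m (show j + 1 ≤ K + 2 by omega)
      rw [Nat.add_mul, Nat.one_mul] at this
      exact this
    have e3 : d * δ ≤ (K + 2) * δ := Nat.mul_le_mul_right δ (by omega)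
    have e4 : (K + 2) * m + (K + 2) * δ = (K + 2) * m' := by rw [hmeq]; ring
    have e5 : (K + 2) * m' ≤ w.length := by
      rw [hw']
      exact Nat.mul_le_mul_left _ (le_trans hm'.2 haP)
    calc s₀ + (K + 2) * p = j * m + (i * δ + (K + 1) * (d * δ)) + d * δ := e1
      _ ≤ j * m + m + d * δ := by
          have := Nat.add_le_add_left hkey (j * m)
          exact Nat.add_le_add_right this (d * δ)
      _ ≤ (K + 2) * m + (K + 2) * δ := Nat.add_le_add e2 e3
      _ = (K + 2) * m' := e4
      _ ≤ w.length := e5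
  -- periodicity
  have hper : ∀ t, s₀ ≤ t → t + p < s₀ + (K + 2) * p → w[t]? = w[t + p]? := by
    intro t h1 h2
    obtain ⟨r', rfl⟩ := Nat.exists_eq_add_of_le h1
    -- t = s₀ + r' = j*m + i*δ + r'
    have hr'lt : i * δ + r' < m := by
      have e : (K + 2) * p = (K + 1) * p + p := by ring
      have : s₀ + r' + p < s₀ + ((K + 1) * p + p) := by rw [← e]; exact h2
      have hr'p : r' < (K + 1) * p := by omega
      have : i * δ + r' < i * δ + (K + 1) * (d * δ) := by
        rw [← hpdef]; omega
      omega
    have hr'm' : r' < m' := by omega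
    have eq1 := hper1 (i * δ + r') hr'lt
    have eq2 := hper2 r' hr'm'
    have eA : s₀ + r' = j * m + (i * δ + r') := by rw [hs₀def]; ring
    have eB : i * m' + r' = i * m + (i * δ + r') := by rw [hmeq]; ring
    have eC : s₀ + r' + p = j * m' + r' := by rw [hs₀def, hpdef, hmeq, hjeq]; ring
    calc w[s₀ + r']? = w[j * m + (i * δ + r')]? := by rw [eA]
      _ = w[i * m + (i * δ + r')]? := (eq1).symm
      _ = w[i * m' + r']? := by rw [eB]
      _ = w[j * m' + r']? := eq2
      _ = w[s₀ + r' + p]? := by rw [eC]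
  -- assemble the k-power
  have hflat := power_of_period w p hp (K + 2) s₀ hslen hper
  refine ⟨(w.drop s₀).take p, ?_, ?_⟩
  · apply List.ne_nil_of_length_pos
    rw [List.length_take, List.length_drop]
    have hKp : p ≤ (K + 2) * p := Nat.le_mul_of_pos_left p (by omega)
    have : s₀ + p ≤ w.length := by linarith
    rw [lt_min_iff]
    omega
  · rw [hflat]
    exact ((List.take_prefix _ _).isInfix).trans ((List.drop_suffix _ _).isInfix)

/-- For every `k ≥ 2`, every word of length `(k³ - k² + k)·C(k,2)` over
an arbitrary alphabet contains a `k`-power factor or a `k`-anti-power factor; in other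
words, `N_α(k,k) ≤ (k³ - k² + k)·C(k,2)` for every alphabet size `α`. -/
theorem statement7 (k : ℕ) (hk : 2 ≤ k) :
    (∀ (A : Type*) (w : List A),
      w.length = (k ^ 3 - k ^ 2 + k) * Nat.choose k 2 →
      HasKPowerFactor k w ∨ HasKAntipowerFactor k w) ∧
    (∀ α : ℕ, Nalpha α k ≤ (k ^ 3 - k ^ 2 + k) * Nat.choose k 2) := by
  refine ⟨fun A w hw => statement7_main k hk w hw, ?_⟩
  intro α
  apply Nat.sInf_le
  exact fun w hw => statement7_main k hk w hw
end

section
/- For every integer k ≥ 6, there exists an infinite binary word that is aperiodic, recurrent, and avoids (k, k-5)-anti-powers. One such word is the limit of the sequence defined by w₀ = 0 and w_{n+1} = w_n 1^{(k-3)|w_n|} w_n. -/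
/-- `v` is a `(k,λ)`-anti-power: `v` consists of `k` blocks of equal positive length and
each block is equal to at most `λ` of the blocks. -/
def IsKLAntipower {A : Type*} (k lam : ℕ) (v : List A) : Prop :=
  ∃ m : ℕ, 1 ≤ m ∧ v.length = k * m ∧
    ∀ j < k, Nat.card {i : ℕ // i < k ∧ listBlock v m i = listBlock v m j} ≤ lam

/-- The infinite word `x` avoids `(k,λ)`-anti-powers. -/
def AvoidsKLAntipowers {A : Type*} (x : ℕ → A) (k lam : ℕ) : Prop :=
  ∀ v : List A, IsFactor x v → ¬ IsKLAntipower k lam v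

/-- `x` is eventually periodic: some suffix of `x` is periodic with period `p > 0`. -/
def EventuallyPeriodic {A : Type*} (x : ℕ → A) : Prop :=
  ∃ j p : ℕ, 0 < p ∧ ∀ n, j ≤ n → x (n + p) = x n

/-- `x` is recurrent: every finite factor of `x` occurs at arbitrarily large positions
(hence infinitely often). -/
def Recurrent {A : Type*} (x : ℕ → A) : Prop :=
  ∀ u : List A, IsFactor x u → ∀ N : ℕ, ∃ i, N ≤ i ∧ OccursAt x u i

/-- The sequence `w₀ = 0`, `w_{n+1} = w_n 1^((k-3)|w_n|) w_n` of binary words. -/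
def wSeq (k : ℕ) : ℕ → List (Fin 2)
  | 0 => [0]
  | n + 1 => wSeq k n ++ List.replicate ((k - 3) * (wSeq k n).length) 1 ++ wSeq k n

namespace AP

/-- the limit word -/
def xw (c : ℕ) (i : ℕ) : Fin 2 := (wSeq (c+6) (i+1)).getD i 1

lemma wlen (c : ℕ) : ∀ n, (wSeq (c+6) n).length = (c+5)^n := by
  intro n
  induction n with
  | zero => simp [wSeq]
  | succ n ih =>
    show (wSeq (c+6) n ++ _ ++ wSeq (c+6) n).length = _
    rw [List.length_append, List.length_append, List.length_replicate, ih, pow_succ]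
    have h : c + 6 - 3 = c + 3 := by omega
    rw [h]; ring

lemma wprefix_succ (c n : ℕ) : wSeq (c+6) n <+: wSeq (c+6) (n+1) := by
  refine ⟨List.replicate ((c+6-3) * (wSeq (c+6) n).length) 1 ++ wSeq (c+6) n, ?_⟩
  show _ = wSeq (c+6) n ++ _ ++ wSeq (c+6) n
  rw [List.append_assoc]

lemma wprefix (c : ℕ) {m n : ℕ} (h : m ≤ n) : wSeq (c+6) m <+: wSeq (c+6) n := by
  induction n with
  | zero => simp_all
  | succ n ih =>
    rcases Nat.lt_or_ge m (n+1) with h'|h'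
    · exact (ih (by omega)).trans (wprefix_succ c n)
    · have : m = n + 1 := by omega
      subst this; exact List.prefix_refl _

lemma getD_of_prefix {l₁ l₂ : List (Fin 2)} (h : l₁ <+: l₂) {i : ℕ} (hi : i < l₁.length) :
    l₂.getD i 1 = l₁.getD i 1 := by
  rw [List.getD_eq_getElem _ _ hi, List.getD_eq_getElem _ _ (hi.trans_le h.length_le)]
  exact (h.getElem hi).symm

lemma x_eq (c : ℕ) {N i : ℕ} (hi : i < (c+5)^N) : xw c i = (wSeq (c+6) N).getD i 1 := by
  have hlt : ∀ M, i < M → i < (c+5)^M := fun M hM =>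
    lt_of_lt_of_le (Nat.lt_pow_self (n := i) (by omega)) (Nat.pow_le_pow_right (by omega) (by omega))
  have h1 : i < (wSeq (c+6) (i+1)).length := by rw [wlen]; exact hlt _ (by omega)
  have h2 : i < (wSeq (c+6) N).length := by rw [wlen]; exact hi
  rcases Nat.le_total (i+1) N with h|h
  · exact (getD_of_prefix (wprefix c h) h1).symm
  · exact getD_of_prefix (wprefix c h) h2

lemma wsucc_lo (c : ℕ) {n i : ℕ} (h : i < (c+5)^n) :
    (wSeq (c+6) (n+1)).getD i 1 = (wSeq (c+6) n).getD i 1 := by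
  have h1 : i < (wSeq (c+6) n).length := by rw [wlen]; exact h
  show ((wSeq (c+6) n ++ _) ++ wSeq (c+6) n).getD i 1 = _
  rw [List.getD_append _ _ _ _ (by rw [List.length_append]; omega),
    List.getD_append _ _ _ _ h1]

lemma wsucc_mid (c : ℕ) {n i : ℕ} (h1 : (c+5)^n ≤ i) (h2 : i < (c+4)*(c+5)^n) :
    (wSeq (c+6) (n+1)).getD i 1 = 1 := by
  have hL : (wSeq (c+6) n).length = (c+5)^n := wlen c n
  have h63 : c + 6 - 3 = c + 3 := by omega
  have e1 : (c+5)^n + (c+3)*(c+5)^n = (c+4)*(c+5)^n := by ring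
  show ((wSeq (c+6) n ++ List.replicate ((c+6-3) * (wSeq (c+6) n).length) 1) ++ wSeq (c+6) n).getD i 1 = (1 : Fin 2)
  rw [List.getD_append _ _ _ _ (by
      simp only [List.length_append, List.length_replicate, hL, h63]; omega),
    List.getD_append_right _ _ _ _ (by rw [hL]; omega)]
  have hi : i - (wSeq (c+6) n).length < (List.replicate ((c+6-3) * (wSeq (c+6) n).length) (1:Fin 2)).length := by
    simp only [List.length_replicate, hL, h63]; omega
  rw [List.getD_eq_getElem _ _ hi, List.getElem_replicate]

lemma wsucc_hi (c : ℕ) {n i : ℕ} (h1 : (c+4)*(c+5)^n ≤ i) (h2 : i < (c+5)^(n+1)) :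
    (wSeq (c+6) (n+1)).getD i 1 = (wSeq (c+6) n).getD (i - (c+4)*(c+5)^n) 1 := by
  have hL : (wSeq (c+6) n).length = (c+5)^n := wlen c n
  have h63 : c + 6 - 3 = c + 3 := by omega
  have e1 : (c+5)^n + (c+3)*(c+5)^n = (c+4)*(c+5)^n := by ring
  show ((wSeq (c+6) n ++ List.replicate ((c+6-3) * (wSeq (c+6) n).length) 1) ++ wSeq (c+6) n).getD i 1 = _
  rw [List.getD_append_right _ _ _ _ (by
      simp only [List.length_append, List.length_replicate, hL, h63]; omega)]
  congr 1
  simp only [List.length_append, List.length_replicate, hL, h63]; omega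

lemma ones (c : ℕ) {N p : ℕ} (h1 : (c+5)^N ≤ p) (h2 : p < (c+4)*(c+5)^N) :
    xw c p = 1 := by
  have hp : p < (c+5)^(N+1) := by
    have e1 : (c+5)^(N+1) = (c+5)*(c+5)^N := by ring
    have e2 : (c+4)*(c+5)^N + (c+5)^N = (c+5)*(c+5)^N := by ring
    omega
  rw [x_eq c hp, wsucc_mid c h1 h2]

lemma shift (c : ℕ) {M z : ℕ} (hz : z < (c+5)^M) :
    xw c ((c+4)*(c+5)^M + z) = xw c z := by
  have e1 : (c+5)^(M+1) = (c+5)*(c+5)^M := by ring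
  have e2 : (c+4)*(c+5)^M + (c+5)^M = (c+5)*(c+5)^M := by ring
  have hlt : (c+4)*(c+5)^M + z < (c+5)^(M+1) := by omega
  rw [x_eq c hlt, wsucc_hi c (by omega) hlt, x_eq c hz]
  congr 1
  omega

lemma zero0 (c : ℕ) : xw c 0 = 0 := by
  have h : (0:ℕ) < (c+5)^0 := by norm_num
  rw [x_eq c h]
  simp [wSeq]

lemma zeroQ (c : ℕ) (M : ℕ) : xw c ((c+4)*(c+5)^M) = 0 := by
  have := shift c (M := M) (z := 0) (by positivity)
  simpa [zero0] using this

lemma zero_decomp (c : ℕ) (S : ℕ) {z : ℕ} (hz : xw c z = 0) :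
    ∃ j r, z = (c+4)*(c+5)^S*j + r ∧ r < (c+5)^S ∧ xw c r = 0 := by
  have key : ∀ d z, z < (c+5)^(S+d) → xw c z = 0 →
      ∃ j r, z = (c+4)*(c+5)^S*j + r ∧ r < (c+5)^S ∧ xw c r = 0 := by
    intro d
    induction d with
    | zero => intro z hzlt hz0; exact ⟨0, z, by simp, hzlt, hz0⟩
    | succ d ih =>
      intro z hzlt hz0
      set n := S + d with hn
      rcases Nat.lt_or_ge z ((c+5)^n) with h|h
      · exact ih z h hz0
      rcases Nat.lt_or_ge z ((c+4)*(c+5)^n) with h'|h'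
      · rw [ones c h h'] at hz0; exact absurd hz0 (by decide)
      · have hz' : z - (c+4)*(c+5)^n < (c+5)^n := by
          have e1 : (c+5)^(n+1) = (c+5)*(c+5)^n := by ring
          have e2 : (c+4)*(c+5)^n + (c+5)^n = (c+5)*(c+5)^n := by ring
          have : z < (c+5)^(n+1) := hzlt
          omega
        have hx0 : xw c (z - (c+4)*(c+5)^n) = 0 := by
          have := shift c hz'
          rw [← hz0]
          rw [← this]
          congr 1
          omega
        obtain ⟨j, r, hjr, hr, hxr⟩ := ih _ hz' hx0
        refine ⟨(c+5)^d + j, r, ?_, hr, hxr⟩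
        have e3 : (c+4)*(c+5)^n = (c+4)*(c+5)^S*(c+5)^d := by
          rw [hn, pow_add]; ring
        rw [mul_add]
        omega
  have hzN : z < (c+5)^(S+(z+1)) := by
    have h1 : z < (c+5)^(z+1) :=
      lt_of_lt_of_le (Nat.lt_pow_self (n := z) (by omega)) (Nat.pow_le_pow_right (by omega) (by omega))
    exact lt_of_lt_of_le h1 (Nat.pow_le_pow_right (by omega) (by omega))
  exact key (z+1) z hzN hz

lemma five_exists {s : Finset ℕ} (h : 5 ≤ s.card) :
    ∃ t1 t2 t3 t4 t5, t1 ∈ s ∧ t2 ∈ s ∧ t3 ∈ s ∧ t4 ∈ s ∧ t5 ∈ s ∧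
      t1 < t2 ∧ t2 < t3 ∧ t3 < t4 ∧ t4 < t5 := by
  obtain ⟨t, hts, htc⟩ := Finset.exists_subset_card_eq h
  obtain ⟨l, hlen, hsort, hmem⟩ : ∃ l : List ℕ, l.length = 5 ∧ l.Pairwise (·<·) ∧ ∀ x ∈ l, x ∈ s :=
    ⟨t.sort (· ≤ ·), by simp [htc], (Finset.sortedLT_sort t).pairwise,
      fun x hx => hts ((Finset.mem_sort _).mp hx)⟩
  rcases l with _|⟨a,l⟩; · simp at hlen
  rcases l with _|⟨b,l⟩; · simp at hlen
  rcases l with _|⟨c,l⟩; · simp at hlen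
  rcases l with _|⟨d,l⟩; · simp at hlen
  rcases l with _|⟨e,l⟩; · simp at hlen
  rcases l with _|⟨f,l⟩
  · simp only [List.pairwise_cons, List.mem_cons] at hsort
    refine ⟨a,b,c,d,e, hmem a (by simp), hmem b (by simp), hmem c (by simp),
      hmem d (by simp), hmem e (by simp), ?_, ?_, ?_, ?_⟩ <;> tauto
  · simp at hlen

/-- If two zeros in blocks t < t' lie in different clusters at scale BS,
then the block gap is at least c+3. -/
lemma adjJump (c : ℕ) {a m BS t t' z z' j j' r r' : ℕ}
    (hm : 1 ≤ m) (hmBS : m < BS) (htt : t < t') (hj : j ≠ j')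
    (hz : a + t*m ≤ z) (hz2 : z < a + t*m + m)
    (hz' : a + t'*m ≤ z') (hz2' : z' < a + t'*m + m)
    (hd : z = (c+4)*BS*j + r) (hd' : z' = (c+4)*BS*j' + r')
    (hr : r < BS) (hr' : r' < BS) : t + (c+3) ≤ t' := by
  set Q := (c+4)*BS with hQ
  have hb1 : t*m + m ≤ t'*m := by
    have := Nat.mul_le_mul_right m (show t+1 ≤ t' by omega)
    rw [add_mul, one_mul] at this; exact this
  have hzz' : z < z' := by omega
  by_contra hcon
  have hb2 : t'*m ≤ t*m + (c+2)*m := by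
    have := Nat.mul_le_mul_right m (show t' ≤ t + (c+2) by omega)
    rw [add_mul] at this; exact this
  have hQBS : BS ≤ Q := by
    calc BS = 1*BS := (one_mul _).symm
    _ ≤ (c+4)*BS := Nat.mul_le_mul_right _ (by omega)
  rcases Nat.lt_or_ge j' j with hlt|hge
  · have hstep : Q*j' + Q ≤ Q*j := by
      have := Nat.mul_le_mul_left Q (show j'+1 ≤ j by omega)
      rw [mul_add, mul_one] at this; exact this
    omega
  · have hjlt : j < j' := by omega
    have hstep : Q*j + Q ≤ Q*j' := by
      have := Nat.mul_le_mul_left Q (show j+1 ≤ j' by omega)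
      rw [mul_add, mul_one] at this; exact this
    have hE : (c+3)*m < (c+3)*BS := by
      have h0 : (0:ℕ) < c+3 := by omega
      exact (mul_lt_mul_iff_right₀ h0).mpr hmBS
    have hQsplit : Q = BS + (c+3)*BS := by rw [hQ]; ring
    have hFsplit : (c+3)*m = (c+2)*m + m := by ring
    omega

/-- Two zeros in the same cluster whose offsets differ by less than m
cannot be 2 blocks apart. -/
lemma nearContra {a m t1 t3 z1 z3 : ℕ}
    (h1 : a + t1*m ≤ z1) (h2 : z1 < a + t1*m + m)
    (h3 : a + t3*m ≤ z3) (htt : t1 + 2 ≤ t3)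
    (hnear : z3 < z1 + m) : False := by
  have hb : t1*m + 2*m ≤ t3*m := by
    have := Nat.mul_le_mul_right m htt
    rw [add_mul] at this; omega
  omega

/-- Core counting lemma: at most 4 of the k blocks of any window contain a zero. -/
lemma core (c a m : ℕ) (hm : 1 ≤ m) :
    ((Finset.range (c+6)).filter (fun t => ∃ j, j < m ∧ xw c (a + t*m + j) = 0)).card ≤ 4 := by
  by_contra hcard
  push_neg at hcard
  obtain ⟨t1,t2,t3,t4,t5,m1,m2,m3,m4,m5,l12,l23,l34,l45⟩ := five_exists hcard
  simp only [Finset.mem_filter, Finset.mem_range] at m1 m2 m3 m4 m5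
  obtain ⟨hk1, i1, hi1, hx1⟩ := m1
  obtain ⟨hk2, i2, hi2, hx2⟩ := m2
  obtain ⟨hk3, i3, hi3, hx3⟩ := m3
  obtain ⟨hk4, i4, hi4, hx4⟩ := m4
  obtain ⟨hk5, i5, hi5, hx5⟩ := m5
  set z1 := a + t1*m + i1 with hz1d
  set z2 := a + t2*m + i2 with hz2d
  set z3 := a + t3*m + i3 with hz3d
  set z4 := a + t4*m + i4 with hz4d
  set z5 := a + t5*m + i5 with hz5d
  set n := Nat.log (c+5) m with hn
  set B := (c+5)^n with hB
  set BS := (c+5)^(n+1) with hBS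
  have hBm : B ≤ m := Nat.pow_log_le_self (c+5) (by omega)
  have hmBS : m < BS := Nat.lt_pow_succ_log_self (by omega) m
  have hBpos : 0 < B := by positivity
  have hBSB : BS = (c+5)*B := by rw [hBS, hB, pow_succ]; ring
  obtain ⟨j1, r1, hd1, hr1, hxr1⟩ := zero_decomp c (n+1) hx1
  obtain ⟨j2, r2, hd2, hr2, hxr2⟩ := zero_decomp c (n+1) hx2
  obtain ⟨j3, r3, hd3, hr3, hxr3⟩ := zero_decomp c (n+1) hx3
  obtain ⟨j4, r4, hd4, hr4, hxr4⟩ := zero_decomp c (n+1) hx4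
  obtain ⟨j5, r5, hd5, hr5, hxr5⟩ := zero_decomp c (n+1) hx5
  rw [← hBS] at hr1 hr2 hr3 hr4 hr5 hd1 hd2 hd3 hd4 hd5
  -- all five zeros lie in the same cluster
  have e12 : j1 = j2 := by
    by_contra hne
    have := adjJump c (a:=a) (m:=m) (BS:=BS) (t:=t1) (t':=t2) (z:=z1) (z':=z2) hm hmBS l12 hne (by omega) (by omega) (by omega) (by omega) hd1 hd2 hr1 hr2
    omega
  have e23 : j2 = j3 := by
    by_contra hne
    have := adjJump c (a:=a) (m:=m) (BS:=BS) (t:=t2) (t':=t3) (z:=z2) (z':=z3) hm hmBS l23 hne (by omega) (by omega) (by omega) (by omega) hd2 hd3 hr2 hr3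
    omega
  have e34 : j3 = j4 := by
    by_contra hne
    have := adjJump c (a:=a) (m:=m) (BS:=BS) (t:=t3) (t':=t4) (z:=z3) (z':=z4) hm hmBS l34 hne (by omega) (by omega) (by omega) (by omega) hd3 hd4 hr3 hr4
    omega
  have e45 : j4 = j5 := by
    by_contra hne
    have := adjJump c (a:=a) (m:=m) (BS:=BS) (t:=t4) (t':=t5) (z:=z4) (z':=z5) hm hmBS l45 hne (by omega) (by omega) (by omega) (by omega) hd4 hd5 hr4 hr5
    omega
  subst e12 e23 e34 e45
  -- sub-decompose r3 at scale n
  obtain ⟨j', r', hd', hr', _⟩ := zero_decomp c n hxr3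
  rw [← hB] at hd' hr'
  rcases Nat.lt_or_ge j' 1 with hj'|hj'
  · -- j' = 0 : r3 < B, use pair (1,3)
    interval_cases j'
    have hr3B : r3 < B := by omega
    exact nearContra (show a + t1*m ≤ z1 by omega) (show z1 < a + t1*m + m by omega)
      (show a + t3*m ≤ z3 by omega) (by omega) (by omega)
  rcases Nat.lt_or_ge j' 2 with hj''|hj''
  · -- j' = 1 : r3 ≥ (c+4)*B, use pair (3,5)
    interval_cases j'
    rw [mul_one] at hd'
    have h5 : r5 < (c+4)*B + B := by
      have : (c+4)*B + B = (c+5)*B := by ring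
      omega
    exact nearContra (show a + t3*m ≤ z3 by omega) (show z3 < a + t3*m + m by omega)
      (show a + t5*m ≤ z5 by omega) (by omega) (by omega)
  · -- j' ≥ 2 impossible
    have hbig : (c+4)*B*2 ≤ (c+4)*B*j' := Nat.mul_le_mul_left _ hj''
    have hsp : (c+4)*B*2 = (c+5)*B + (c+3)*B := by ring
    omega

lemma occurs_pointwise {x : ℕ → Fin 2} {u : List (Fin 2)} {i : ℕ}
    (h : ∀ j, j < u.length → u.getD j 1 = x (i + j)) : OccursAt x u i := by
  refine List.ext_getElem (by simp) ?_
  intro j h1 h2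
  simp only [List.getElem_map, List.getElem_range]
  rw [← List.getD_eq_getElem u 1 h1]
  exact h j h1

lemma pt_of_occurs {x : ℕ → Fin 2} {u : List (Fin 2)} {i : ℕ}
    (h : OccursAt x u i) : ∀ j, j < u.length → u.getD j 1 = x (i + j) := by
  intro j hj
  conv_lhs => rw [h]
  rw [List.getD_eq_getElem _ _ (by simpa using hj)]
  simp

lemma occurs0 (c n : ℕ) : OccursAt (xw c) (wSeq (c+6) n) 0 := by
  apply occurs_pointwise
  intro j hj
  have hj' : j < (c+5)^n := by rw [← wlen c n]; exact hj
  rw [zero_add, x_eq c hj']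

lemma not_ep (c : ℕ) : ¬ EventuallyPeriodic (xw c) := by
  rintro ⟨J, p, hp, hper⟩
  have iter : ∀ q t, J ≤ q → xw c (q + t*p) = xw c q := by
    intro q t hq
    induction t with
    | zero => simp
    | succ t ih =>
      have e : q + (t+1)*p = (q + t*p) + p := by ring
      rw [e, hper _ (by omega), ih]
  -- the zero position z
  set N := J with hN
  have hJN : J < (c+5)^N := Nat.lt_pow_self (n := J) (by omega)
  set z := (c+4)*(c+5)^N with hz
  have hzJ : J ≤ z := by
    have h1 : (c+5)^N ≤ (c+4)*(c+5)^N := by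
      calc (c+5)^N = 1*(c+5)^N := (one_mul _).symm
      _ ≤ (c+4)*(c+5)^N := Nat.mul_le_mul_right _ (by omega)
    omega
  have hz0 : xw c z = 0 := zeroQ c N
  -- the ones interval
  set M := z + p with hM
  set L := (c+5)^M with hL
  have hML : M < L := Nat.lt_pow_self (n := M) (by omega)
  have hLle : L ≤ (c+3)*L := by
    calc L = 1*L := (one_mul _).symm
    _ ≤ (c+3)*L := Nat.mul_le_mul_right _ (by omega)
  obtain ⟨D, R, hsum, hR⟩ : ∃ D R, L - z = D*p + R ∧ R < p := by
    refine ⟨(L-z)/p, (L-z)%p, ?_, Nat.mod_lt _ hp⟩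
    have h := Nat.div_add_mod (L - z) p
    rw [mul_comm] at h
    exact h.symm
  set t := D + 1 with ht
  have htp : t*p = D*p + p := by rw [ht]; ring
  have hzL : z + p < L := by omega
  have h1 : L ≤ z + t*p := by omega
  have h2 : z + t*p < (c+4)*L := by
    have e : (c+4)*L = L + (c+3)*L := by ring
    omega
  have hone : xw c (z + t*p) = 1 := ones c h1 h2
  have hzero : xw c (z + t*p) = 0 := by rw [iter z t hzJ, hz0]
  rw [hone] at hzero
  exact absurd hzero (by decide)

lemma recur (c : ℕ) : Recurrent (xw c) := by
  intro u hu N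
  obtain ⟨i, hocc⟩ := hu
  have hpt : ∀ j, j < u.length → u.getD j 1 = xw c (i + j) := pt_of_occurs hocc
  set M := i + u.length + N with hM
  set L := (c+5)^M with hL
  have hML : M < L := Nat.lt_pow_self (n := M) (by omega)
  have hLle : L ≤ (c+4)*L := by
    calc L = 1*L := (one_mul _).symm
    _ ≤ (c+4)*L := Nat.mul_le_mul_right _ (by omega)
  refine ⟨(c+4)*L + i, by omega, ?_⟩
  apply occurs_pointwise
  intro j hj
  have hij : i + j < L := by omega
  have e : (c+4)*L + i + j = (c+4)*(c+5)^M + (i + j) := by rw [hL]; ring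
  rw [e, shift c hij]
  exact hpt j hj

lemma avoid (c : ℕ) : AvoidsKLAntipowers (xw c) (c+6) (c+1) := by
  rintro v ⟨i, hocc⟩ ⟨m, hm, hlen, hcond⟩
  classical
  -- description of blocks
  have hblock : ∀ t, t < c+6 → listBlock v m t = (List.range m).map (fun j => xw c (i + t*m + j)) := by
    intro t ht
    have hlb : (listBlock v m t).length = m := by
      have h1 : (t+1)*m ≤ (c+6)*m := Nat.mul_le_mul_right _ (by omega)
      simp only [listBlock, List.length_take, List.length_drop, hlen]
      rw [add_mul, one_mul] at h1
      omega
    refine List.ext_getElem (by simp [hlb]) ?_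
    intro j h1 h2
    have hj : j < m := by omega
    have hvj : t*m + j < v.length := by
      have h1' : (t+1)*m ≤ (c+6)*m := Nat.mul_le_mul_right _ (by omega)
      rw [add_mul, one_mul] at h1'
      rw [hlen]; omega
    have hget : (listBlock v m t)[j] = v[t*m + j] := by
      simp only [listBlock]
      rw [List.getElem_take, List.getElem_drop]
    rw [hget]
    have hv : v[t*m+j] = xw c (i + (t*m + j)) := by
      rw [← List.getD_eq_getElem v 1 hvj]
      exact pt_of_occurs hocc _ hvj
    rw [hv]
    simp only [List.getElem_map, List.getElem_range]
    congr 1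
    omega
  set T := (Finset.range (c+6)).filter (fun t => ∃ j, j < m ∧ xw c (i + t*m + j) = 0) with hT
  have hTcard : T.card ≤ 4 := core c i m hm
  have hTsub : T ⊆ Finset.range (c+6) := Finset.filter_subset _ _
  set U := Finset.range (c+6) \ T with hU
  have hUcard : c + 2 ≤ U.card := by
    rw [hU, Finset.card_sdiff_of_subset hTsub, Finset.card_range]
    omega
  have hones : ∀ t ∈ U, listBlock v m t = List.replicate m 1 := by
    intro t htU
    rw [hU, Finset.mem_sdiff, Finset.mem_range] at htU
    obtain ⟨ht6, htT⟩ := htU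
    rw [hblock t ht6]
    refine List.ext_getElem (by simp) ?_
    intro j h1 h2
    simp only [List.getElem_map, List.getElem_range, List.getElem_replicate]
    have hj : j < m := by simpa using h1
    by_contra hne
    have h0 : xw c (i + t*m + j) = 0 := by
      have := (xw c (i + t*m + j)).isLt
      omega
    exact htT (by rw [hT]; simp only [Finset.mem_filter, Finset.mem_range]; exact ⟨ht6, j, hj, h0⟩)
  have hUmem : ∀ t ∈ U, t < c + 6 := by
    intro t ht
    rw [hU, Finset.mem_sdiff, Finset.mem_range] at ht
    exact ht.1
  obtain ⟨j0, hj0⟩ := Finset.card_pos.mp (show 0 < U.card by omega)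
  have hj06 : j0 < c + 6 := hUmem j0 hj0
  have hinj : Nat.card {t // t ∈ U} ≤ Nat.card {i' : ℕ // i' < c+6 ∧ listBlock v m i' = listBlock v m j0} := by
    have hfin : Finite {i' : ℕ // i' < c+6 ∧ listBlock v m i' = listBlock v m j0} := by
      refine Finite.of_injective (fun s => (⟨s.1, s.2.1⟩ : Fin (c+6))) ?_
      intro s s' h
      apply Subtype.ext
      simpa [Fin.ext_iff] using h
    refine Nat.card_le_card_of_injective
      (fun s => ⟨s.1, hUmem s.1 s.2, by rw [hones s.1 s.2, hones j0 hj0]⟩) ?_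
    intro s s' h
    apply Subtype.ext
    simpa using congrArg Subtype.val h
  rw [Nat.card_eq_finsetCard] at hinj
  have := hcond j0 hj06
  omega

end AP

/-- For every `k ≥ 6` there is an infinite binary word that is aperiodic,
recurrent, and avoids `(k, k-5)`-anti-powers; one such word is the limit of the sequence
`w₀ = 0`, `w_{n+1} = w_n 1^((k-3)|w_n|) w_n` (i.e. the word having every `w_n` as a prefix). -/
theorem statement12 (k : ℕ) (hk : 6 ≤ k) :
    ∃ x : ℕ → Fin 2, (∀ n, OccursAt x (wSeq k n) 0) ∧
      ¬ EventuallyPeriodic x ∧ Recurrent x ∧ AvoidsKLAntipowers x k (k - 5) := by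
  obtain ⟨c, rfl⟩ : ∃ c, k = c + 6 := ⟨k - 6, by omega⟩
  refine ⟨AP.xw c, fun n => AP.occurs0 c n, AP.not_ep c, AP.recur c, ?_⟩
  have h5 : c + 6 - 5 = c + 1 := by omega
  rw [h5]
  exact AP.avoid c
end

section
/- Let θ ∈ (0,1) be irrational and x ∈ ℝ, and let s_{θ,x} be the upper mechanical word with angle θ and initial position x (such words are exactly the Sturmian words). Then for every integer k ≥ 2 and every position j ≥ 1, there is an occurrence of a k-anti-power in s_{θ,x} starting at position j: that is, there exists m ≥ 1 such that the factor of s_{θ,x} of length km beginning at position j is a k-anti-power. -/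
/-- Hitting lemma: stepping by a small positive `β` mod 1 from any start `y`,
we land in any interval `[c, c+β) ⊆ [0,1)` within about `1/β` steps. -/
lemma hit_lemma (β : ℝ) (hβ0 : 0 < β) (c y : ℝ) (hc0 : 0 ≤ c) (hc1 : c + β ≤ 1) :
    ∃ s : ℕ, (s : ℝ) < 1/β + 1 ∧ c ≤ Int.fract (y + s*β) ∧ Int.fract (y + s*β) < c + β := by
  set u := Int.fract y with hu_def
  have hu0 : 0 ≤ u := Int.fract_nonneg y
  have hu1 : u < 1 := Int.fract_lt_one y
  set r : ℤ := ⌈u - c⌉ with hr_def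
  have hr1 : u - c ≤ (r:ℝ) := Int.le_ceil _
  have hr2 : (r:ℝ) < u - c + 1 := Int.ceil_lt_add_one _
  have hr0 : 0 ≤ r := by
    by_contra h
    push_neg at h
    have h' : r + 1 ≤ 0 := h
    have : (r:ℝ) + 1 ≤ 0 := by exact_mod_cast h'
    linarith
  set s0 : ℤ := ⌈(c + r - u)/β⌉ with hs0_def
  have hnum0 : 0 ≤ (c + (r:ℝ) - u) := by linarith
  have key1 : (c + (r:ℝ) - u)/β ≤ (s0:ℝ) := Int.le_ceil _
  have key2 : (s0:ℝ) < (c + (r:ℝ) - u)/β + 1 := Int.ceil_lt_add_one _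
  have hs0nn : 0 ≤ s0 := Int.ceil_nonneg (by positivity)
  have hc' : (s0.toNat : ℝ) = (s0:ℝ) := by exact_mod_cast Int.toNat_of_nonneg hs0nn
  -- bounds on s0*β
  have hb1 : c + (r:ℝ) - u ≤ (s0:ℝ) * β := by
    rw [div_le_iff₀ hβ0] at key1; linarith
  have hb2 : (s0:ℝ) * β < c + (r:ℝ) - u + β := by
    have := (lt_div_iff₀ hβ0).mp (by linarith : (s0:ℝ) - 1 < (c + (r:ℝ) - u)/β)
    linarith
  -- the fract value
  have hval : Int.fract (y + s0.toNat*β) = u + (s0:ℝ)*β - r := by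
    have heq : y + (s0.toNat:ℝ)*β = (u + (s0:ℝ)*β - (r:ℝ)) + ((⌊y⌋ + r : ℤ) : ℝ) := by
      push_cast [hc']
      have : u = y - ⌊y⌋ := by rw [hu_def, Int.fract]
      linarith
    rw [heq, Int.fract_add_intCast, Int.fract_eq_self.mpr ⟨by linarith, by linarith⟩]
  refine ⟨s0.toNat, ?_, ?_, ?_⟩
  · rw [hc']
    have h3 : (c + (r:ℝ) - u) < 1 := by linarith
    have h5 : (s0:ℝ) < (1+β)/β := (lt_div_iff₀ hβ0).mpr (by linarith)
    have h6 : (1+β)/β = 1/β + 1 := by field_simp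
    linarith
  · rw [hval]; linarith
  · rw [hval]; linarith


lemma small_fract (θ : ℝ) (hirr : Irrational θ) (η : ℝ) (hη : 0 < η) (hη1 : η < 1) :
    ∃ q : ℕ, 1 ≤ q ∧ 0 < Int.fract ((q:ℝ)*θ) ∧ Int.fract ((q:ℝ)*θ) < η := by
  obtain ⟨n, hn⟩ := exists_nat_gt (1/η)
  have hnpos : 0 < n := by
    have := one_div_pos.mpr hη
    by_contra h
    push_neg at h
    interval_cases n
    linarith
  obtain ⟨q0, hq0pos, _, happ⟩ := Real.exists_nat_abs_mul_sub_round_le θ hnpos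
  set R : ℤ := round ((q0:ℝ)*θ) with hR
  have hδη : |(q0:ℝ)*θ - R| < η := by
    have h1 : (0:ℝ) < (n:ℝ) + 1 := by positivity
    have h2 : 1/((n:ℝ)+1) < η := by
      rw [div_lt_iff₀ h1]
      rw [div_lt_iff₀ hη] at hn
      nlinarith
    calc |(q0:ℝ)*θ - R| ≤ 1/((n:ℝ)+1) := happ
    _ < η := h2
  have hδirr : Irrational ((q0:ℝ)*θ - R) := (hirr.natCast_mul hq0pos.ne' |>.sub_intCast _)
  have hδne : ((q0:ℝ)*θ - R) ≠ 0 := hδirr.ne_zero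
  rcases hδne.lt_or_gt with hneg | hpos
  · -- negative case: flip using multiples of γ := R - q0 θ ∈ (0, η)
    have hγ0 : 0 < (R:ℝ) - (q0:ℝ)*θ := by linarith
    have hγη : (R:ℝ) - (q0:ℝ)*θ < η := by rw [abs_of_neg hneg] at hδη; linarith
    have hγirr : Irrational ((R:ℝ) - (q0:ℝ)*θ) := by
      have := hδirr.neg
      rwa [neg_sub] at this
    have hγ1 : (R:ℝ) - (q0:ℝ)*θ < 1 := by linarith
    have hinvirr : Irrational (((R:ℝ) - (q0:ℝ)*θ)⁻¹) := hγirr.inv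
    have hinv1 : 1 < ((R:ℝ) - (q0:ℝ)*θ)⁻¹ := by
      rw [lt_inv_comm₀ zero_lt_one hγ0]; simpa using hγ1
    set γ : ℝ := (R:ℝ) - (q0:ℝ)*θ with hγdef
    clear_value γ
    have hfl0 : (0:ℤ) ≤ ⌊γ⁻¹⌋ := Int.floor_nonneg.mpr (by linarith)
    have hfl1 : (1:ℤ) ≤ ⌊γ⁻¹⌋ := Int.le_floor.mpr (by push_cast; linarith)
    set n1 : ℕ := ⌊γ⁻¹⌋.toNat with hn1
    have hn1pos : 1 ≤ n1 := by omega
    have hc : (n1:ℝ) = (⌊γ⁻¹⌋:ℝ) := by exact_mod_cast Int.toNat_of_nonneg hfl0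
    have hlt : (n1:ℝ) < γ⁻¹ := by
      rw [hc]
      exact (Int.floor_le γ⁻¹).lt_of_ne (fun h => (hinvirr.ne_int ⌊γ⁻¹⌋) h.symm)
    have hgt : γ⁻¹ - 1 < (n1:ℝ) := by rw [hc]; linarith [Int.lt_floor_add_one γ⁻¹]
    have hinvγ : γ⁻¹ * γ = 1 := inv_mul_cancel₀ hγ0.ne'
    have hn1γlt : (n1:ℝ)*γ < 1 := by
      have := mul_lt_mul_of_pos_right hlt hγ0
      rwa [hinvγ] at this
    have hn1γgt : 1 - γ < (n1:ℝ)*γ := by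
      have h1 := mul_lt_mul_of_pos_right hgt hγ0
      have h2 : (γ⁻¹ - 1)*γ = 1 - γ := by rw [sub_mul, hinvγ, one_mul]
      linarith
    have hn1γ0 : 0 < (n1:ℝ)*γ := by positivity
    have heq : ((n1*q0 : ℕ):ℝ)*θ = (-((n1:ℝ)*γ)) + (((n1:ℕ)*R : ℤ):ℝ) := by
      push_cast
      rw [hγdef]
      ring
    have hfr : Int.fract (((n1*q0 : ℕ):ℝ)*θ) = 1 - (n1:ℝ)*γ := by
      rw [heq, Int.fract_add_intCast, Int.fract_neg, Int.fract_eq_self.mpr ⟨hn1γ0.le, hn1γlt⟩]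
      rw [Int.fract_eq_self.mpr ⟨hn1γ0.le, hn1γlt⟩]
      exact hn1γ0.ne'
    exact ⟨n1 * q0, Nat.one_le_iff_ne_zero.mpr (by positivity), by rw [hfr]; linarith,
      by rw [hfr]; linarith⟩
  · refine ⟨q0, hq0pos, ?_, ?_⟩ <;>
    · have hub : (q0:ℝ)*θ - R < 1 := by rw [abs_of_pos hpos] at hδη; linarith
      have heq : (q0:ℝ)*θ = ((q0:ℝ)*θ - R) + (R:ℝ) := by ring
      rw [heq, Int.fract_add_intCast, Int.fract_eq_self.mpr ⟨hpos.le, hub⟩]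
      first
        | exact hpos
        | (rw [abs_of_pos hpos] at hδη; linarith)



/-- The `i`-th block of length `m` of the infinite word `s` starting from position `j`,
so that the factor of `s` of length `k*m` beginning at position `j` is
`factorBlock s j m 0 ++ ⋯ ++ factorBlock s j m (k-1)`. -/
def factorBlock {A : Type*} (s : ℕ → A) (j m i : ℕ) : List A :=
  (List.range m).map fun t => s (j + i * m + t)

/-- The upper mechanical word `s_{θ,x}` (0-indexed): the `n`-th letter is `1` if the
fractional part of `θ·n + x` lies in `[1-θ, 1)` and `0` if it lies in `[0, 1-θ)`. -/
noncomputable def upperMech (θ x : ℝ) : ℕ → ℕ := fun n =>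
  if 1 - θ ≤ Int.fract (θ * n + x) then 1 else 0

lemma blocks_ne {A : Type*} {s : ℕ → A} {j m a b t : ℕ} (ht : t < m)
    (hne : s (j + a*m + t) ≠ s (j + b*m + t)) :
    factorBlock s j m a ≠ factorBlock s j m b := by
  intro h
  apply hne
  have h2 := congrArg (fun l : List A => l[t]?) h
  simpa [factorBlock, List.getElem?_map, List.getElem?_range, ht] using h2

/-- Let `θ ∈ (0,1)` be irrational and `x ∈ ℝ`.  For every `k ≥ 2` and
every position `j`, there is an `m ≥ 1` such that the factor of the Sturmian word
`s_{θ,x}` of length `k*m` beginning at position `j` is a `k`-anti-power, i.e. its `k`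
consecutive blocks of length `m` are pairwise distinct. -/
theorem statement14 (θ x : ℝ) (hθ0 : 0 < θ) (hθ1 : θ < 1) (hirr : Irrational θ)
    (k : ℕ) (hk : 2 ≤ k) (j : ℕ) :
    ∃ m : ℕ, 1 ≤ m ∧ ∀ a < k, ∀ b < k, a ≠ b →
      factorBlock (upperMech θ x) j m a ≠ factorBlock (upperMech θ x) j m b := by
  have hk0 : (2:ℝ) ≤ (k:ℝ) := by exact_mod_cast hk
  have hkpos : (0:ℝ) < k := by linarith
  set μ := min θ (1-θ) with hμ
  have hμ0 : 0 < μ := lt_min hθ0 (by linarith)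
  have hμθ : μ ≤ θ := min_le_left _ _
  have hμ1θ : μ ≤ 1-θ := min_le_right _ _
  set η : ℝ := μ / (2*k) with hηdef
  have hη0 : 0 < η := by positivity
  have h2kη : 2*(k:ℝ)*η = μ := by rw [hηdef]; field_simp
  have hη4 : 4*η ≤ μ := by nlinarith
  have hη1 : η < 1 := by nlinarith
  obtain ⟨q, hq1, hβ0, hβη⟩ := small_fract θ hirr η hη0 hη1
  set β := Int.fract ((q:ℝ)*θ) with hβdef
  have hβ1 : β < 1 := Int.fract_lt_one _
  have hb0 : (0:ℝ) < 1/β := by positivity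
  set Sb : ℕ := ⌈1/β⌉.toNat + 1 with hSbdef
  have hSbR : 1/β + 1 ≤ (Sb:ℝ) := by
    have h1 : 1/β ≤ ((⌈1/β⌉:ℤ):ℝ) := Int.le_ceil _
    have h2 : ((⌈1/β⌉.toNat:ℕ):ℝ) = ((⌈1/β⌉:ℤ):ℝ) := by
      exact_mod_cast Int.toNat_of_nonneg (Int.ceil_nonneg hb0.le)
    rw [hSbdef]
    push_cast
    rw [h2]
    linarith
  set N : ℕ := q * Sb + 1 with hNdef
  have hηβ1 : η + β ≤ 1 := by nlinarith
  obtain ⟨s1, hs1b, h1a, h1b⟩ := hit_lemma β hβ0 η (θ*((N:ℕ):ℝ)) hη0.le hηβ1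
  set m : ℕ := N + s1 * q with hmdef
  have hfloorq : ((⌊(q:ℝ)*θ⌋:ℝ)) = (q:ℝ)*θ - β := by
    rw [hβdef]; exact (Int.self_sub_fract _).symm
  have hmθ : θ*(m:ℝ) = (θ*((N:ℕ):ℝ) + (s1:ℝ)*β) + (((s1:ℤ)*⌊(q:ℝ)*θ⌋ : ℤ):ℝ) := by
    rw [hmdef]
    push_cast
    rw [hfloorq]
    ring
  have hβm_eq : Int.fract (θ*(m:ℝ)) = Int.fract (θ*((N:ℕ):ℝ) + (s1:ℝ)*β) := by
    rw [hmθ, Int.fract_add_intCast]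
  set βm := Int.fract (θ*(m:ℝ)) with hβmdef
  have hβm_lb : η ≤ βm := by rw [hβm_eq]; exact h1a
  have hβm_ub : βm < 2*η := by
    rw [hβm_eq]
    linarith
  have hβm0 : 0 ≤ βm := Int.fract_nonneg _
  have hm1 : 1 ≤ m := by omega
  have hfloorm : ((⌊θ*(m:ℝ)⌋:ℝ)) = θ*(m:ℝ) - βm := by
    rw [hβmdef]; exact (Int.self_sub_fract _).symm
  have main : ∀ a b : ℕ, a < b → b < k →
      factorBlock (upperMech θ x) j m a ≠ factorBlock (upperMech θ x) j m b := by
    intro a b hab hbk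
    have hbk' : (b:ℝ) ≤ (k:ℝ) - 1 := by
      have h' : (b:ℕ) + 1 ≤ k := hbk
      have h'' := (Nat.cast_le (α := ℝ)).mpr h'
      push_cast at h''
      linarith
    have habR : (a:ℝ) + 1 ≤ (b:ℝ) := by exact_mod_cast hab
    obtain ⟨s, hsb, hca, hcb⟩ := hit_lemma β hβ0 (1-θ-η) (θ*((j:ℝ) + (a:ℝ)*(m:ℝ)) + x)
      (by linarith) (by linarith)
    set t := s * q with htdef
    have hsSb : s < Sb := by
      have h' : (s:ℝ) < (Sb:ℝ) := lt_of_lt_of_le hsb hSbR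
      exact_mod_cast h'
    have htm : t < m := by
      have h1 : s*q < Sb*q := Nat.mul_lt_mul_of_lt_of_le hsSb (le_refl q) (by omega)
      have h2 : Sb * q = q * Sb := mul_comm _ _
      omega
    -- first position, pushed form
    have hu_eq : Int.fract (θ*((j:ℝ) + (a:ℝ)*(m:ℝ) + (t:ℝ)) + x)
        = Int.fract ((θ*((j:ℝ) + (a:ℝ)*(m:ℝ)) + x) + (s:ℝ)*β) := by
      have heq : θ*((j:ℝ) + (a:ℝ)*(m:ℝ) + (t:ℝ)) + x
          = ((θ*((j:ℝ) + (a:ℝ)*(m:ℝ)) + x) + (s:ℝ)*β) + (((s:ℤ)*⌊(q:ℝ)*θ⌋ : ℤ):ℝ) := by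
        rw [htdef]
        push_cast
        rw [hfloorq]
        ring
      rw [heq, Int.fract_add_intCast]
    have hu1 : 1-θ-η ≤ Int.fract (θ*((j:ℝ) + (a:ℝ)*(m:ℝ) + (t:ℝ)) + x) := by
      rw [hu_eq]; exact hca
    have hu2 : Int.fract (θ*((j:ℝ) + (a:ℝ)*(m:ℝ) + (t:ℝ)) + x) < 1-θ := by
      rw [hu_eq]; linarith
    have hu0 : 0 ≤ Int.fract (θ*((j:ℝ) + (a:ℝ)*(m:ℝ) + (t:ℝ)) + x) := Int.fract_nonneg _
    have hfloorw : ((⌊θ*((j:ℝ) + (a:ℝ)*(m:ℝ) + (t:ℝ)) + x⌋:ℝ))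
        = θ*((j:ℝ) + (a:ℝ)*(m:ℝ) + (t:ℝ)) + x - Int.fract (θ*((j:ℝ) + (a:ℝ)*(m:ℝ) + (t:ℝ)) + x) :=
      (Int.self_sub_fract _).symm
    -- second position
    have hba1 : (1:ℝ) ≤ (b:ℝ)-(a:ℝ) := by linarith
    have hbak : (b:ℝ)-(a:ℝ) ≤ (k:ℝ)-1 := by
      have : (0:ℝ) ≤ (a:ℝ) := Nat.cast_nonneg a
      linarith
    have hdlb : η ≤ ((b:ℝ)-(a:ℝ))*βm := by
      have h1 := mul_le_mul_of_nonneg_right hba1 hβm0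
      rw [one_mul] at h1
      linarith
    have hdub : ((b:ℝ)-(a:ℝ))*βm < θ - 2*η := by
      have hk1 : (0:ℝ) < (k:ℝ)-1 := by linarith
      have h1 := mul_le_mul_of_nonneg_right hbak hβm0
      have h2 := mul_lt_mul_of_pos_left hβm_ub hk1
      have h3 : ((k:ℝ)-1)*(2*η) = 2*(k:ℝ)*η - 2*η := by ring
      linarith
    have hn2 : θ*((j:ℝ) + (b:ℝ)*(m:ℝ) + (t:ℝ)) + x
        = (Int.fract (θ*((j:ℝ) + (a:ℝ)*(m:ℝ) + (t:ℝ)) + x) + ((b:ℝ)-(a:ℝ))*βm)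
          + ((⌊θ*((j:ℝ) + (a:ℝ)*(m:ℝ) + (t:ℝ)) + x⌋ + ((b-a : ℕ):ℤ)*⌊θ*(m:ℝ)⌋ : ℤ):ℝ) := by
      rw [Int.cast_add, Int.cast_mul, hfloorw, hfloorm]
      have hba : (((b-a : ℕ):ℤ):ℝ) = (b:ℝ) - (a:ℝ) := by
        push_cast [Nat.cast_sub hab.le]
        ring
      rw [hba]
      ring
    have hval2 : Int.fract (θ*((j:ℝ) + (b:ℝ)*(m:ℝ) + (t:ℝ)) + x)
        = Int.fract (θ*((j:ℝ) + (a:ℝ)*(m:ℝ) + (t:ℝ)) + x) + ((b:ℝ)-(a:ℝ))*βm := by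
      rw [hn2, Int.fract_add_intCast]
      exact Int.fract_eq_self.mpr ⟨by linarith, by linarith⟩
    -- letters
    have hcast1 : θ * ((j + a*m + t : ℕ):ℝ) + x = θ*((j:ℝ) + (a:ℝ)*(m:ℝ) + (t:ℝ)) + x := by
      push_cast; ring
    have hcast2 : θ * ((j + b*m + t : ℕ):ℝ) + x = θ*((j:ℝ) + (b:ℝ)*(m:ℝ) + (t:ℝ)) + x := by
      push_cast; ring
    have hlet1 : upperMech θ x (j + a*m + t) = 0 := by
      simp only [upperMech, hcast1]
      rw [if_neg (not_le.mpr hu2)]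
    have hlet2 : upperMech θ x (j + b*m + t) = 1 := by
      simp only [upperMech, hcast2]
      rw [if_pos (by rw [hval2]; linarith)]
    exact blocks_ne htm (by rw [hlet1, hlet2]; norm_num)
  refine ⟨m, hm1, ?_⟩
  intro a ha b hb hne
  rcases hne.lt_or_gt with h | h
  · exact main a b h hb
  · exact (main b a h ha).symm
end
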